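/- Let G be a group, H a complex Hilbert space, π : G → U(H) a group homomorphism into the group of unitary operators on H, ξ ∈ H, and ε ≥ 0. If ‖π(g)ξ − ξ‖ ≤ ε for every g ∈ G, then there exists a vector η ∈ H with π(g)η = η for every g ∈ G and ‖η − ξ‖ ≤ ε. -/

import Mathlib

open Filter

/-- If `π` is a unitary representation of a group `G` on a complex Hilbert
space `H` and `ξ ∈ H` satisfies `‖π(g)ξ − ξ‖ ≤ ε` for all `g ∈ G`, then there is a
`π`-invariant vector `η` with `‖η − ξ‖ ≤ ε`. -/
theorem invariant_vector_near_almost_invariant {G : Type*} [Group G] {H : Type*}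
    [NormedAddCommGroup H] [InnerProductSpace ℂ H] [CompleteSpace H]
    (π : G →* (H ≃ₗᵢ[ℂ] H)) (ξ : H) (ε : ℝ) (hε : 0 ≤ ε)
    (h : ∀ g : G, ‖π g ξ - ξ‖ ≤ ε) :
    ∃ η : H, (∀ g : G, π g η = η) ∧ ‖η - ξ‖ ≤ ε := by
  classical
  haveI : Nonempty G := ⟨1⟩
  -- the "circumradius function" of the orbit of ξ
  set r : H → ℝ := fun x => ⨆ g : G, ‖x - π g ξ‖ with hr
  have bdd : ∀ x : H, BddAbove (Set.range fun g : G => ‖x - π g ξ‖) := by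
    intro x
    refine ⟨‖x - ξ‖ + ε, ?_⟩
    rintro _ ⟨g, rfl⟩
    calc ‖x - π g ξ‖ ≤ ‖x - ξ‖ + ‖ξ - π g ξ‖ := norm_sub_le_norm_sub_add_norm_sub x ξ _
    _ ≤ ‖x - ξ‖ + ε := add_le_add_right (by rw [norm_sub_rev]; exact h g) _
  have hle_r : ∀ (x : H) (g : G), ‖x - π g ξ‖ ≤ r x := fun x g => le_ciSup (bdd x) g
  have hr_le : ∀ (x : H) (c : ℝ), (∀ g : G, ‖x - π g ξ‖ ≤ c) → r x ≤ c :=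
    fun x c hc => ciSup_le hc
  have r_nonneg : ∀ x : H, 0 ≤ r x := fun x => le_trans (norm_nonneg _) (hle_r x 1)
  -- r is invariant under the action
  have hmove : ∀ (g k : G) (x : H), ‖π g x - π k ξ‖ = ‖x - π (g⁻¹ * k) ξ‖ := by
    intro g k x
    have e1 : π g (π (g⁻¹ * k) ξ) = π k ξ := by
      have e2 := map_mul π g (g⁻¹ * k)
      rw [mul_inv_cancel_left] at e2
      rw [e2]; rfl
    rw [← e1, ← map_sub, (π g).norm_map]
  have r_inv : ∀ (g : G) (x : H), r (π g x) = r x := by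
    intro g x
    have hrange : (Set.range fun k : G => ‖π g x - π k ξ‖)
        = Set.range fun k : G => ‖x - π k ξ‖ := by
      ext y
      constructor
      · rintro ⟨k, rfl⟩; exact ⟨g⁻¹ * k, (hmove g k x).symm⟩
      · rintro ⟨k, rfl⟩
        refine ⟨g * k, ?_⟩
        show ‖π g x - π (g * k) ξ‖ = ‖x - π k ξ‖
        rw [hmove g (g * k) x, inv_mul_cancel_left]
    simp only [hr]
    rw [iSup, iSup, hrange]
  -- the infimum of r
  have bddb : BddBelow (Set.range r) := ⟨0, by rintro _ ⟨x, rfl⟩; exact r_nonneg x⟩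
  set R : ℝ := sInf (Set.range r) with hR
  have hR_le : ∀ x : H, R ≤ r x := fun x => csInf_le bddb ⟨x, rfl⟩
  have hR0 : 0 ≤ R := le_csInf ⟨r ξ, ⟨ξ, rfl⟩⟩ (by rintro _ ⟨x, rfl⟩; exact r_nonneg x)
  -- parallelogram estimate: key convexity inequality
  have key : ∀ a b : H, ‖a - b‖ ^ 2 ≤ 2 * (r a) ^ 2 + 2 * (r b) ^ 2 - 4 * R ^ 2 := by
    intro a b
    set m : H := (2 : ℂ)⁻¹ • (a + b) with hm
    set Q : ℝ := (2 * (r a) ^ 2 + 2 * (r b) ^ 2 - ‖a - b‖ ^ 2) / 4 with hQ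
    have hms : ∀ g : G, ‖m - π g ξ‖ ^ 2 ≤ Q := by
      intro g
      set s : H := π g ξ with hs
      have e1 : m - s = (2 : ℂ)⁻¹ • ((a - s) + (b - s)) := by
        rw [hm]
        module
      have e2 : ‖m - s‖ = 2⁻¹ * ‖(a - s) + (b - s)‖ := by
        rw [e1, norm_smul]
        norm_num
      have e3 : a - b = (a - s) - (b - s) := by abel
      have par := parallelogram_law_with_norm ℂ (a - s) (b - s)
      have ha' : ‖a - s‖ ≤ r a := hle_r a g
      have hb' : ‖b - s‖ ≤ r b := hle_r b g
      have hna : (0:ℝ) ≤ ‖a - s‖ := norm_nonneg _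
      have hnb : (0:ℝ) ≤ ‖b - s‖ := norm_nonneg _
      rw [e2, hQ]
      rw [e3]
      nlinarith [norm_nonneg ((a - s) + (b - s)), norm_nonneg ((a-s) - (b-s))]
    have hQ0 : 0 ≤ Q := le_trans (sq_nonneg _) (hms 1)
    have hrm : r m ≤ Real.sqrt Q := by
      refine hr_le m _ fun g => ?_
      rw [Real.le_sqrt (norm_nonneg _) hQ0]
      exact hms g
    have hRQ : R ^ 2 ≤ Q := by
      have h1 : R ≤ Real.sqrt Q := le_trans (hR_le m) hrm
      have := pow_le_pow_left₀ hR0 h1 2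
      rwa [Real.sq_sqrt hQ0] at this
    rw [hQ] at hRQ
    linarith
  -- a minimizing sequence
  have hex : ∀ n : ℕ, ∃ x : H, r x < R + 1 / (n + 1) := by
    intro n
    have hlt : R < R + 1 / (n + 1) := by
      have : (0:ℝ) < 1 / (n + 1) := by positivity
      linarith
    obtain ⟨_, ⟨x, rfl⟩, hx⟩ := exists_lt_of_csInf_lt ⟨r ξ, Set.mem_range_self ξ⟩ hlt
    exact ⟨x, hx⟩
  choose x hx using hex
  have hu0 : Tendsto (fun n : ℕ => 1 / ((n : ℝ) + 1)) atTop (nhds 0) :=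
    tendsto_one_div_add_atTop_nhds_zero_nat
  -- the sequence is Cauchy
  have hcauchy : CauchySeq x := by
    refine cauchySeq_of_le_tendsto_0
      (fun N : ℕ => Real.sqrt (8 * R * (1 / ((N:ℝ) + 1)) + 4 * (1 / ((N:ℝ) + 1)) ^ 2)) ?_ ?_
    · intro n m N hn hm
      have hupos : (0:ℝ) < 1 / ((N:ℝ) + 1) := by positivity
      have hun : (1:ℝ) / ((n:ℝ) + 1) ≤ 1 / ((N:ℝ) + 1) := by
        apply one_div_le_one_div_of_le
        · positivity
        · have := (Nat.cast_le (α := ℝ)).mpr hn; linarith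
      have hum : (1:ℝ) / ((m:ℝ) + 1) ≤ 1 / ((N:ℝ) + 1) := by
        apply one_div_le_one_div_of_le
        · positivity
        · have := (Nat.cast_le (α := ℝ)).mpr hm; linarith
      have h1 := key (x n) (x m)
      have h2 := (hx n).le
      have h3 := (hx m).le
      have hrn := r_nonneg (x n)
      have hrm := r_nonneg (x m)
      have hb1 : (r (x n)) ^ 2 ≤ (R + 1 / ((N:ℝ) + 1)) ^ 2 := by nlinarith
      have hb2 : (r (x m)) ^ 2 ≤ (R + 1 / ((N:ℝ) + 1)) ^ 2 := by nlinarith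
      have expand : 2 * (R + 1 / ((N:ℝ) + 1)) ^ 2 + 2 * (R + 1 / ((N:ℝ) + 1)) ^ 2 - 4 * R ^ 2
          = 8 * R * (1 / ((N:ℝ) + 1)) + 4 * (1 / ((N:ℝ) + 1)) ^ 2 := by ring
      rw [dist_eq_norm]
      rw [Real.le_sqrt (norm_nonneg _) (by nlinarith)]
      linarith
    · have harg : Tendsto (fun N : ℕ => 8 * R * (1 / ((N:ℝ) + 1)) + 4 * (1 / ((N:ℝ) + 1)) ^ 2)
          atTop (nhds 0) := by
        have := ((hu0.const_mul (8 * R)).add ((hu0.pow 2).const_mul 4))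
        simpa [mul_comm] using this
      have := (Real.continuous_sqrt.tendsto 0).comp harg
      rw [Real.sqrt_zero] at this
      exact this
  obtain ⟨η, hη⟩ := cauchySeq_tendsto_of_complete hcauchy
  -- r is 1-Lipschitz
  have rlip : ∀ a b : H, r a ≤ r b + ‖a - b‖ := by
    intro a b
    refine hr_le a _ fun g => ?_
    calc ‖a - π g ξ‖ ≤ ‖a - b‖ + ‖b - π g ξ‖ := norm_sub_le_norm_sub_add_norm_sub a b _
    _ ≤ ‖a - b‖ + r b := add_le_add_right (hle_r b g) _
    _ = r b + ‖a - b‖ := by ring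
  -- r η = R
  have hrη : r η = R := by
    refine le_antisymm ?_ (hR_le η)
    have hnorm0 : Tendsto (fun n => ‖η - x n‖) atTop (nhds 0) := by
      have := tendsto_iff_dist_tendsto_zero.mp hη
      simpa [dist_eq_norm, norm_sub_rev] using this
    have hlim : Tendsto (fun n : ℕ => R + 1 / ((n:ℝ) + 1) + ‖η - x n‖) atTop (nhds (R + 0 + 0)) :=
      (tendsto_const_nhds.add hu0).add hnorm0
    rw [add_zero, add_zero] at hlim
    refine ge_of_tendsto hlim (Eventually.of_forall fun n => ?_)
    calc r η ≤ r (x n) + ‖η - x n‖ := rlip η (x n)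
    _ ≤ R + 1 / ((n:ℝ) + 1) + ‖η - x n‖ := by
        have := (hx n).le
        linarith
  -- uniqueness of the minimizer, hence invariance
  have huniq : ∀ a : H, r a = R → a = η := by
    intro a ha
    have h1 := key a η
    rw [ha, hrη] at h1
    have h2 : ‖a - η‖ ^ 2 ≤ 0 := by linarith
    have h3 : ‖a - η‖ = 0 := by nlinarith [norm_nonneg (a - η)]
    rw [norm_eq_zero, sub_eq_zero] at h3
    exact h3
  refine ⟨η, fun g => huniq _ (by rw [r_inv g η, hrη]), ?_⟩
  have hξ : π (1 : G) ξ = ξ := by rw [map_one]; rfl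
  calc ‖η - ξ‖ = ‖η - π (1:G) ξ‖ := by rw [hξ]
  _ ≤ r η := hle_r η 1
  _ = R := hrη
  _ ≤ r ξ := hR_le ξ
  _ ≤ ε := hr_le ξ ε fun g => by rw [norm_sub_rev]; exact h g
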